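/- arXiv:2102.13411 — 2 statements merged into one kernel-verified Lean document; each statement's English description precedes it below -/
import Mathlib

section
/- Let q be a positive integer, l_θ > 0 and l_s > √q·l_θ. Then there exists a constant r3 > 0 such that r3·(θ′ − θ)ᵀ·dzv(θ′) ≥ |θ′ − θ|² for all θ′ ∈ ℝ^q with |θ′| ≥ l_s and all θ ∈ ℝ^q with |θ| ≤ l_θ. -/
open Real Set Filter
open scoped RealInnerProductSpace

noncomputable section

/-- A continuous function `ρ : [0,∞) → [0,∞)` is of class K if it is strictly
increasing with `ρ 0 = 0`. -/
def IsClassK (ρ : ℝ → ℝ) : Prop :=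
  ContinuousOn ρ (Set.Ici 0) ∧ StrictMonoOn ρ (Set.Ici 0) ∧ ρ 0 = 0

/-- Class K-infinity: class K and unbounded. -/
def IsClassKInfty (ρ : ℝ → ℝ) : Prop :=
  IsClassK ρ ∧ Filter.Tendsto ρ Filter.atTop Filter.atTop

/-- Class KL functions. -/
def IsClassKL (β : ℝ → ℝ → ℝ) : Prop :=
  (∀ t ∈ Set.Ici (0:ℝ), IsClassK fun s => β s t) ∧
  ∀ s ∈ Set.Ici (0:ℝ), AntitoneOn (β s) (Set.Ici 0) ∧
      Filter.Tendsto (β s) Filter.atTop (nhds 0)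

/-- The smooth saturation function with level `ls` and margin `εs`. -/
noncomputable def sat (ls εs s : ℝ) : ℝ :=
  if |s| ≤ ls then s
  else if |s| ≤ ls + εs then s - Real.sign s * (|s| - ls) ^ 2 / (2 * εs)
  else (ls + εs / 2) * Real.sign s

/-- Componentwise saturation on `ℝ^q`. -/
noncomputable def satv {q : ℕ} (ls εs : ℝ) (θ : EuclideanSpace ℝ (Fin q)) :
    EuclideanSpace ℝ (Fin q) := WithLp.toLp 2 (fun i => sat ls εs (θ i))

/-- The dead-zone function with level `lθ`. -/
noncomputable def dz (lθ s : ℝ) : ℝ :=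
  if |s| ≤ lθ then 0
  else if |s| < lθ + 1 then
    (|s| - lθ) ^ 2 * (2 * (lθ + 1) ^ 2 - (2 * lθ + 1) * |s|) * Real.sign s
  else s

/-- Componentwise dead-zone on `ℝ^q`. -/
noncomputable def dzv {q : ℕ} (lθ : ℝ) (θ : EuclideanSpace ℝ (Fin q)) :
    EuclideanSpace ℝ (Fin q) := WithLp.toLp 2 (fun i => dz lθ (θ i))

/-- The product `(s - t) * dz lθ s` is nonnegative whenever `|t| ≤ lθ`. -/
lemma dz_mul_nonneg (lθ : ℝ) (hlθ : 0 < lθ) (s t : ℝ) (ht : |t| ≤ lθ) :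
    0 ≤ (s - t) * dz lθ s := by
  obtain ⟨ht1, ht2⟩ := abs_le.mp ht
  unfold dz
  split_ifs with h1 h2
  · simp
  · push_neg at h1
    have hs0 : s ≠ 0 := by
      intro h; rw [h] at h1; simp at h1; linarith
    have hF : lθ + 1 ≤ 2 * (lθ + 1) ^ 2 - (2 * lθ + 1) * |s| := by nlinarith
    rcases hs0.lt_or_gt with hneg | hpos
    · rw [Real.sign_of_neg hneg, abs_of_neg hneg] at *
      nlinarith [mul_nonneg (show (0:ℝ) ≤ t - s by linarith)
        (mul_nonneg (sq_nonneg (-s - lθ))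
          (show (0:ℝ) ≤ 2 * (lθ + 1) ^ 2 - (2 * lθ + 1) * -s by linarith))]
    · rw [Real.sign_of_pos hpos, abs_of_pos hpos] at *
      nlinarith [mul_nonneg (show (0:ℝ) ≤ s - t by linarith)
        (mul_nonneg (sq_nonneg (s - lθ))
          (show (0:ℝ) ≤ 2 * (lθ + 1) ^ 2 - (2 * lθ + 1) * s by linarith))]
  · push_neg at h1 h2
    rcases abs_cases s with ⟨he, _⟩ | ⟨he, _⟩ <;> rw [he] at h2 <;> nlinarith

set_option maxHeartbeats 1000000 in
/-- Quantitative lower bound for `(s - t) * dz lθ s` away from the dead zone. -/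
lemma dz_mul_key (lθ δ : ℝ) (hlθ : 0 < lθ) (hδ0 : 0 < δ) (hδ1 : δ ≤ 1)
    (s t : ℝ) (ht : |t| ≤ lθ) (hs : lθ + δ ≤ |s|) :
    δ ^ 3 / (lθ + 1) * s ^ 2 ≤ (s - t) * dz lθ s := by
  obtain ⟨ht1, ht2⟩ := abs_le.mp ht
  rw [div_mul_eq_mul_div, div_le_iff₀ (by linarith)]
  unfold dz
  split_ifs with h1 h2
  · exfalso; linarith
  · push_neg at h1
    have hs0 : s ≠ 0 := by
      intro h; rw [h] at h1; simp at h1; linarith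
    have hF : lθ + 1 ≤ 2 * (lθ + 1) ^ 2 - (2 * lθ + 1) * |s| := by nlinarith
    rcases hs0.lt_or_gt with hneg | hpos
    · rw [abs_of_neg hneg] at *
      have e1 : δ ≤ t - s := by linarith
      have e2 : δ ^ 2 ≤ (-s - lθ) ^ 2 := by nlinarith
      have e3 : s ^ 2 ≤ (lθ + 1) ^ 2 := by nlinarith
      rw [Real.sign_of_neg hneg]
      have p1 : δ ^ 3 ≤ (t - s) * (-s - lθ) ^ 2 := by
        have := mul_le_mul e1 e2 (by positivity) (by linarith)
        nlinarith [this]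
      have p2 : δ ^ 3 * (lθ + 1) ≤
          ((t - s) * (-s - lθ) ^ 2) * (2 * (lθ + 1) ^ 2 - (2 * lθ + 1) * -s) :=
        mul_le_mul p1 hF (by linarith) (le_trans (by positivity) p1)
      have p3 : δ ^ 3 * s ^ 2 ≤ δ ^ 3 * (lθ + 1) ^ 2 :=
        mul_le_mul_of_nonneg_left e3 (by positivity)
      nlinarith [mul_le_mul_of_nonneg_right p2 (show (0:ℝ) ≤ lθ + 1 by linarith)]
    · rw [abs_of_pos hpos] at *
      have e1 : δ ≤ s - t := by linarith
      have e2 : δ ^ 2 ≤ (s - lθ) ^ 2 := by nlinarith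
      have e3 : s ^ 2 ≤ (lθ + 1) ^ 2 := by nlinarith
      rw [Real.sign_of_pos hpos]
      have p1 : δ ^ 3 ≤ (s - t) * (s - lθ) ^ 2 := by
        have := mul_le_mul e1 e2 (by positivity) (by linarith)
        nlinarith [this]
      have p2 : δ ^ 3 * (lθ + 1) ≤
          ((s - t) * (s - lθ) ^ 2) * (2 * (lθ + 1) ^ 2 - (2 * lθ + 1) * s) :=
        mul_le_mul p1 hF (by linarith) (le_trans (by positivity) p1)
      have p3 : δ ^ 3 * s ^ 2 ≤ δ ^ 3 * (lθ + 1) ^ 2 :=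
        mul_le_mul_of_nonneg_left e3 (by positivity)
      nlinarith [mul_le_mul_of_nonneg_right p2 (show (0:ℝ) ≤ lθ + 1 by linarith)]
  · push_neg at h1 h2
    have hd3 : δ ^ 3 ≤ 1 := by nlinarith [sq_nonneg δ, sq_nonneg (δ - 1)]
    have hd4 : δ ^ 3 * s ^ 2 ≤ s ^ 2 := by
      nlinarith [mul_le_mul_of_nonneg_right hd3 (sq_nonneg s)]
    rcases abs_cases s with ⟨he, _⟩ | ⟨he, _⟩ <;> rw [he] at h2
    · have k1 : s ≤ (s - lθ) * (lθ + 1) := by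
        nlinarith [mul_nonneg hlθ.le (show (0:ℝ) ≤ s - lθ - 1 by linarith)]
      have k2 : s ^ 2 ≤ (s - t) * s * (lθ + 1) := by
        nlinarith [mul_le_mul_of_nonneg_right k1 (show (0:ℝ) ≤ s by linarith),
          mul_nonneg (show (0:ℝ) ≤ lθ - t by linarith)
            (mul_nonneg (show (0:ℝ) ≤ s by linarith)
              (show (0:ℝ) ≤ lθ + 1 by linarith))]
      linarith
    · have k1 : -s ≤ (-s - lθ) * (lθ + 1) := by
        nlinarith [mul_nonneg hlθ.le (show (0:ℝ) ≤ -s - lθ - 1 by linarith)]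
      have m1 : (-s) * (-s) ≤ ((-s - lθ) * (lθ + 1)) * (-s) :=
        mul_le_mul_of_nonneg_right k1 (by linarith)
      have m2 : (-s - lθ) * (-s) ≤ (t - s) * (-s) :=
        mul_le_mul_of_nonneg_right (by linarith) (by linarith)
      have m3 := mul_le_mul_of_nonneg_right m2 (show (0:ℝ) ≤ lθ + 1 by linarith)
      have k2 : s ^ 2 ≤ (s - t) * s * (lθ + 1) := by linarith [m1, m3]
      linarith

/-- linear lower bound of the dead-zone outside the ball of radius `l_s`. -/
theorem statement4 (q : ℕ) (hq : 0 < q) (lθ ls : ℝ) (hlθ : 0 < lθ)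
    (hls : Real.sqrt q * lθ < ls) :
    ∃ r3 : ℝ, 0 < r3 ∧
      ∀ (θ' θ : EuclideanSpace ℝ (Fin q)), ls ≤ ‖θ'‖ → ‖θ‖ ≤ lθ →
        ‖θ' - θ‖ ^ 2 ≤ r3 * ⟪θ' - θ, dzv lθ θ'⟫ := by
  have hq' : (0:ℝ) < q := by exact_mod_cast hq
  have hsq : 0 < Real.sqrt q := Real.sqrt_pos.mpr hq'
  have hls0 : 0 < ls := lt_trans (by positivity) hls
  set δ : ℝ := min (ls / Real.sqrt q - lθ) 1 with hδdef
  have hδ0 : 0 < δ := by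
    refine lt_min ?_ one_pos
    rw [sub_pos, lt_div_iff₀ hsq]
    linarith [hls]
  have hδ1 : δ ≤ 1 := min_le_right _ _
  refine ⟨(1 + lθ / ls) ^ 2 * q * (lθ + 1) / δ ^ 3, by positivity, ?_⟩
  intro θ' θ hθ' hθ
  -- bound on each component of θ
  have hθcomp : ∀ j, |θ j| ≤ lθ := by
    intro j
    refine le_trans ?_ hθ
    have h1 : |θ j| ^ 2 ≤ ∑ k, ‖θ k‖ ^ 2 := by
      have := Finset.single_le_sum (f := fun k => ‖θ k‖ ^ 2)
        (fun k _ => by positivity) (Finset.mem_univ j)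
      simpa [Real.norm_eq_abs, sq_abs] using this
    calc |θ j| = Real.sqrt (|θ j| ^ 2) := by
          rw [Real.sqrt_sq (abs_nonneg _)]
      _ ≤ Real.sqrt (∑ k, ‖θ k‖ ^ 2) := Real.sqrt_le_sqrt h1
      _ = ‖θ‖ := (EuclideanSpace.norm_eq θ).symm
  -- max component of θ'
  obtain ⟨i, -, hi⟩ := Finset.exists_max_image Finset.univ
    (fun j => (θ' j) ^ 2) (Finset.univ_nonempty_iff.mpr ⟨⟨0, hq⟩⟩)
  have hmax : ‖θ'‖ ^ 2 ≤ q * (θ' i) ^ 2 := by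
    rw [EuclideanSpace.norm_eq, Real.sq_sqrt (by positivity)]
    calc (∑ k, ‖θ' k‖ ^ 2) ≤ ∑ _k : Fin q, (θ' i) ^ 2 := by
          refine Finset.sum_le_sum fun k _ => ?_
          simpa [Real.norm_eq_abs, sq_abs] using hi k (Finset.mem_univ k)
      _ = q * (θ' i) ^ 2 := by
          rw [Finset.sum_const, Finset.card_univ, Fintype.card_fin, nsmul_eq_mul]
  -- the max component is out of the dead zone
  have hai : lθ + δ ≤ |θ' i| := by
    have h1 : (ls / Real.sqrt q) ^ 2 ≤ (θ' i) ^ 2 := by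
      rw [div_pow, Real.sq_sqrt hq'.le, div_le_iff₀ hq']
      calc ls ^ 2 ≤ ‖θ'‖ ^ 2 := by
            have := pow_le_pow_left₀ hls0.le hθ' 2; linarith
        _ ≤ q * (θ' i) ^ 2 := hmax
        _ = (θ' i) ^ 2 * q := mul_comm _ _
    have h2 : ls / Real.sqrt q ≤ |θ' i| := by
      calc ls / Real.sqrt q = Real.sqrt ((ls / Real.sqrt q) ^ 2) := by
            rw [Real.sqrt_sq (by positivity)]
        _ ≤ Real.sqrt ((θ' i) ^ 2) := Real.sqrt_le_sqrt h1
        _ = |θ' i| := Real.sqrt_sq_eq_abs _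
    have h3 : δ ≤ ls / Real.sqrt q - lθ := min_le_left _ _
    linarith
  -- expand the inner product as a sum
  have hinner : ⟪θ' - θ, dzv lθ θ'⟫ = ∑ j, (θ' j - θ j) * dz lθ (θ' j) := by
    rw [PiLp.inner_apply]
    refine Finset.sum_congr rfl fun j _ => ?_
    simp [dzv, RCLike.inner_apply, conj_trivial, mul_comm]
  have hsum : δ ^ 3 / (lθ + 1) * (θ' i) ^ 2 ≤ ⟪θ' - θ, dzv lθ θ'⟫ := by
    rw [hinner]
    calc δ ^ 3 / (lθ + 1) * (θ' i) ^ 2 ≤ (θ' i - θ i) * dz lθ (θ' i) :=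
          dz_mul_key lθ δ hlθ hδ0 hδ1 _ _ (hθcomp i) hai
      _ ≤ ∑ j, (θ' j - θ j) * dz lθ (θ' j) :=
          Finset.single_le_sum (fun j _ => dz_mul_nonneg lθ hlθ _ _ (hθcomp j))
            (Finset.mem_univ i)
  have hcoef : 0 ≤ δ ^ 3 / (lθ + 1) := by positivity
  have h2 : δ ^ 3 / (lθ + 1) * (‖θ'‖ ^ 2 / q) ≤ ⟪θ' - θ, dzv lθ θ'⟫ := by
    refine le_trans ?_ hsum
    have : ‖θ'‖ ^ 2 / q ≤ (θ' i) ^ 2 := by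
      rw [div_le_iff₀ hq']; linarith [hmax]
    exact mul_le_mul_of_nonneg_left this hcoef
  have hnorm : ‖θ' - θ‖ ^ 2 ≤ (1 + lθ / ls) ^ 2 * ‖θ'‖ ^ 2 := by
    have h1 : ‖θ' - θ‖ ≤ (1 + lθ / ls) * ‖θ'‖ := by
      have h2 : ‖θ' - θ‖ ≤ ‖θ'‖ + ‖θ‖ := norm_sub_le _ _
      have h3 : lθ ≤ lθ / ls * ‖θ'‖ := by
        rw [div_mul_eq_mul_div, le_div_iff₀ hls0]
        exact mul_le_mul_of_nonneg_left hθ' hlθ.le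
      calc ‖θ' - θ‖ ≤ ‖θ'‖ + ‖θ‖ := h2
        _ ≤ ‖θ'‖ + lθ := by linarith
        _ ≤ ‖θ'‖ + lθ / ls * ‖θ'‖ := by linarith
        _ = (1 + lθ / ls) * ‖θ'‖ := by ring
    calc ‖θ' - θ‖ ^ 2 ≤ ((1 + lθ / ls) * ‖θ'‖) ^ 2 :=
          pow_le_pow_left₀ (norm_nonneg _) h1 2
      _ = (1 + lθ / ls) ^ 2 * ‖θ'‖ ^ 2 := by ring
  calc ‖θ' - θ‖ ^ 2 ≤ (1 + lθ / ls) ^ 2 * ‖θ'‖ ^ 2 := hnorm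
    _ = (1 + lθ / ls) ^ 2 * q * (lθ + 1) / δ ^ 3 *
          (δ ^ 3 / (lθ + 1) * (‖θ'‖ ^ 2 / q)) := by
        field_simp
    _ ≤ (1 + lθ / ls) ^ 2 * q * (lθ + 1) / δ ^ 3 * ⟪θ' - θ, dzv lθ θ'⟫ :=
        mul_le_mul_of_nonneg_left h2 (by positivity)
end
end

section
/- Under Assumption 3 and with φ and ς continuous, there exists k_dz* > 0 such that for every k_dz ≥ k_dz*, every θ ∈ Θ, every θ̃ ∈ ℝ^q and every x_r ∈ ℝⁿ with |x_r| ≤ r1, the function H(θ, θ̃, x_r) := −ς(x_r)·[φ(satv(θ + θ̃), x_r) − φ(satv(θ), x_r)] − k_dz·dzv(θ̃ + θ) satisfies θ̃ᵀ·H(θ, θ̃, x_r) ≤ −θ̃ᵀ·M1(x_r)·θ̃ ≤ 0. -/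
open Real Set Filter
open scoped RealInnerProductSpace

noncomputable section

section satdz_aux

lemma sat_eq_self {ls εs s : ℝ} (h : |s| ≤ ls) : sat ls εs s = s := if_pos h

lemma abs_sat_le {ls εs : ℝ} (hls : 0 < ls) (hεs : 0 < εs) (s : ℝ) :
    |sat ls εs s| ≤ ls + εs := by
  unfold sat
  split_ifs with h1 h2
  · rw [abs_le] at h1 ⊢; constructor <;> linarith
  · push_neg at h1
    have key : 0 ≤ (|s| - ls) ^ 2 / (2 * εs) := by positivity
    have key2 : (|s| - ls) ^ 2 / (2 * εs) ≤ εs / 2 := by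
      rw [div_le_iff₀ (by positivity)]; nlinarith [abs_nonneg s]
    rcases lt_trichotomy s 0 with hs | hs | hs
    · rw [Real.sign_of_neg hs, abs_of_neg hs] at *
      have e : -1 * (-s - ls) ^ 2 / (2 * εs) = -((-s - ls) ^ 2 / (2 * εs)) := by ring
      rw [e, abs_le]; constructor <;> linarith
    · simp [hs] at h1; linarith
    · rw [Real.sign_of_pos hs, abs_of_pos hs] at *
      have e : 1 * (s - ls) ^ 2 / (2 * εs) = (s - ls) ^ 2 / (2 * εs) := by ring
      rw [e, abs_le]; constructor <;> linarith
  · push_neg at h1 h2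
    rcases lt_trichotomy s 0 with hs | hs | hs
    · rw [Real.sign_of_neg hs, abs_le]; constructor <;> nlinarith [abs_nonneg s]
    · subst hs; simp at h1; linarith
    · rw [Real.sign_of_pos hs, abs_le]; constructor <;> nlinarith [abs_nonneg s]

lemma dz_neg (lθ b : ℝ) : dz lθ (-b) = -dz lθ b := by
  unfold dz
  simp only [abs_neg, Real.sign_neg]
  split_ifs <;> ring

lemma dz_L0' {lθ a b : ℝ} (hlθ : 0 < lθ) (ha : |a| ≤ lθ) (hb : 0 < b) :
    0 ≤ (b - a) * dz lθ b := by
  rw [abs_le] at ha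
  unfold dz
  rw [abs_of_pos hb, Real.sign_of_pos hb]
  split_ifs with h1 h2
  · simp
  · push_neg at h1
    have f1 : 0 ≤ 2 * (lθ + 1) ^ 2 - (2 * lθ + 1) * b := by nlinarith
    simp only [mul_one]
    exact mul_nonneg (by linarith) (mul_nonneg (sq_nonneg _) f1)
  · push_neg at h1 h2
    exact mul_nonneg (by linarith) (by linarith)

lemma dz_L0 {lθ a b : ℝ} (hlθ : 0 < lθ) (ha : |a| ≤ lθ) : 0 ≤ (b - a) * dz lθ b := by
  rcases lt_trichotomy b 0 with hb | hb | hb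
  · have := dz_L0' (a := -a) (b := -b) hlθ (by rwa [abs_neg]) (by linarith)
    rw [dz_neg] at this
    have e : (-b - -a) * -dz lθ b = (b - a) * dz lθ b := by ring
    exact e ▸ this
  · subst hb
    have : dz lθ 0 = 0 := by unfold dz; rw [if_pos (by simp; linarith)]
    simp [this]
  · exact dz_L0' hlθ ha hb

lemma dz_L1' {lθ a b : ℝ} (hlθ : 0 < lθ) (ha : |a| ≤ lθ) (hb : lθ + 1 ≤ b) :
    (b - lθ) * b ≤ (b - a) * dz lθ b := by
  rw [abs_le] at ha
  have hb0 : 0 < b := by linarith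
  unfold dz
  rw [abs_of_pos hb0]
  rw [if_neg (by push_neg; linarith), if_neg (by push_neg; linarith)]
  have h1 : b - lθ ≤ b - a := by linarith
  exact mul_le_mul_of_nonneg_right h1 (by linarith)

lemma dz_L1 {lθ a b : ℝ} (hlθ : 0 < lθ) (ha : |a| ≤ lθ) (hb : lθ + 1 ≤ |b|) :
    (|b| - lθ) * |b| ≤ (b - a) * dz lθ b := by
  rcases lt_trichotomy b 0 with hb0 | hb0 | hb0
  · rw [abs_of_neg hb0] at *
    have := dz_L1' (a := -a) (b := -b) hlθ (by rwa [abs_neg]) hb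
    rw [dz_neg] at this
    have e : (-b - -a) * -dz lθ b = (b - a) * dz lθ b := by ring
    exact e ▸ this
  · subst hb0; simp at hb; linarith
  · rw [abs_of_pos hb0] at *; exact dz_L1' hlθ ha hb

lemma dz_L2' {lθ a b d : ℝ} (hlθ : 0 < lθ) (ha : |a| ≤ lθ) (hd0 : 0 < d) (hd1 : d ≤ 1)
    (hb : lθ + d ≤ b) : d ^ 3 * (lθ + 1) ≤ (b - a) * dz lθ b := by
  rw [abs_le] at ha
  have hb0 : 0 < b := by linarith
  have hba : d ≤ b - a := by linarith
  unfold dz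
  rw [abs_of_pos hb0, Real.sign_of_pos hb0]
  rw [if_neg (by push_neg; linarith)]
  split_ifs with h2
  · have f1 : lθ + 1 ≤ 2 * (lθ + 1) ^ 2 - (2 * lθ + 1) * b := by nlinarith
    have g1 : d ^ 2 ≤ (b - lθ) ^ 2 := by nlinarith
    have g2 : d ^ 2 * (lθ + 1) ≤ (b - lθ) ^ 2 * (2 * (lθ + 1) ^ 2 - (2 * lθ + 1) * b) :=
      mul_le_mul g1 f1 (by linarith) (sq_nonneg _)
    calc d ^ 3 * (lθ + 1) = d * (d ^ 2 * (lθ + 1)) := by ring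
      _ ≤ (b - a) * ((b - lθ) ^ 2 * (2 * (lθ + 1) ^ 2 - (2 * lθ + 1) * b)) :=
          mul_le_mul hba g2 (by positivity) (by linarith)
      _ = (b - a) * ((b - lθ) ^ 2 * (2 * (lθ + 1) ^ 2 - (2 * lθ + 1) * b) * 1) := by ring
  · push_neg at h2
    have hd3 : d ^ 3 ≤ d := by
      nlinarith [mul_nonneg (mul_nonneg hd0.le (sub_nonneg.2 hd1)) (by linarith : (0:ℝ) ≤ 1 + d)]
    calc d ^ 3 * (lθ + 1) ≤ d * (lθ + 1) := by nlinarith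
      _ ≤ (b - a) * b := mul_le_mul hba (by linarith) (by linarith) (by linarith)

lemma dz_L2 {lθ a b d : ℝ} (hlθ : 0 < lθ) (ha : |a| ≤ lθ) (hd0 : 0 < d) (hd1 : d ≤ 1)
    (hb : lθ + d ≤ |b|) : d ^ 3 * (lθ + 1) ≤ (b - a) * dz lθ b := by
  rcases lt_trichotomy b 0 with hb0 | hb0 | hb0
  · rw [abs_of_neg hb0] at hb
    have := dz_L2' (a := -a) (b := -b) hlθ (by rwa [abs_neg]) hd0 hd1 hb
    rw [dz_neg] at this
    have e : (-b - -a) * -dz lθ b = (b - a) * dz lθ b := by ring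
    exact e ▸ this
  · subst hb0; simp at hb; linarith
  · rw [abs_of_pos hb0] at hb; exact dz_L2' hlθ ha hd0 hd1 hb

lemma coord_le {q : ℕ} (v : EuclideanSpace ℝ (Fin q)) (i : Fin q) : |v i| ≤ ‖v‖ := by
  rw [EuclideanSpace.norm_eq]
  rw [Real.le_sqrt (abs_nonneg _)]
  swap
  · positivity
  rw [sq_abs]
  calc v i ^ 2 = ‖v i‖ ^ 2 := by rw [Real.norm_eq_abs, sq_abs]
    _ ≤ ∑ j, ‖v j‖ ^ 2 :=
      Finset.single_le_sum (fun j _ => sq_nonneg ‖v j‖) (Finset.mem_univ i)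

lemma exists_big_coord {q : ℕ} (hq : 0 < q) (v : EuclideanSpace ℝ (Fin q)) :
    ∃ i, ‖v‖ ≤ Real.sqrt q * |v i| := by
  obtain ⟨i, -, hi⟩ := Finset.exists_max_image Finset.univ (fun j => |v j|)
    ⟨⟨0, hq⟩, Finset.mem_univ _⟩
  refine ⟨i, ?_⟩
  rw [EuclideanSpace.norm_eq]
  have h1 : ∑ j, ‖v j‖ ^ 2 ≤ (q : ℝ) * |v i| ^ 2 := by
    calc ∑ j, ‖v j‖ ^ 2 ≤ ∑ _j : Fin q, |v i| ^ 2 := by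
          apply Finset.sum_le_sum
          intro j _
          rw [Real.norm_eq_abs]
          exact pow_le_pow_left₀ (abs_nonneg _) (hi j (Finset.mem_univ j)) 2
      _ = (q : ℝ) * |v i| ^ 2 := by simp [Finset.sum_const]
  calc Real.sqrt (∑ j, ‖v j‖ ^ 2) ≤ Real.sqrt ((q : ℝ) * |v i| ^ 2) := Real.sqrt_le_sqrt h1
    _ = Real.sqrt q * |v i| := by
        rw [Real.sqrt_mul (Nat.cast_nonneg q), Real.sqrt_sq (abs_nonneg _)]

lemma norm_le_of_coord {q : ℕ} {v : EuclideanSpace ℝ (Fin q)} {c : ℝ} (hc : 0 ≤ c)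
    (h : ∀ i, |v i| ≤ c) : ‖v‖ ≤ Real.sqrt q * c := by
  rw [EuclideanSpace.norm_eq]
  calc Real.sqrt (∑ j, ‖v j‖ ^ 2) ≤ Real.sqrt ((q : ℝ) * c ^ 2) := by
        apply Real.sqrt_le_sqrt
        calc ∑ j, ‖v j‖ ^ 2 ≤ ∑ _j : Fin q, c ^ 2 := by
              apply Finset.sum_le_sum
              intro j _
              rw [Real.norm_eq_abs]
              exact pow_le_pow_left₀ (abs_nonneg _) (h j) 2
          _ = (q : ℝ) * c ^ 2 := by simp [Finset.sum_const]
    _ = Real.sqrt q * c := by rw [Real.sqrt_mul (Nat.cast_nonneg q), Real.sqrt_sq hc]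

lemma arith1 {sq lθ ls : ℝ} (h1 : 1 ≤ sq) (h2 : 0 < lθ) (h3 : sq * lθ < ls) : lθ < ls := by
  nlinarith

lemma arith_lin {cς cφ δ nt : ℝ} (hcς : 0 ≤ cς) (hcφ : 0 ≤ cφ) (hδ : 0 < δ)
    (h : δ ≤ nt) : nt * (cς * (2 * cφ)) ≤ 2 * cς * cφ / δ * nt ^ 2 := by
  rw [div_mul_eq_mul_div, le_div_iff₀ hδ]
  nlinarith [mul_nonneg (mul_nonneg (mul_nonneg (by norm_num : (0:ℝ) ≤ 2) hcς) hcφ)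
    (mul_nonneg (le_trans hδ.le h) (sub_nonneg.2 h))]

lemma arith_sq {sq qr s nt : ℝ} (hsq2 : sq ^ 2 = qr) (h : nt * nt ≤ 2 * sq * s * (2 * sq * s)) :
    nt ^ 2 ≤ 4 * qr * s ^ 2 := by nlinarith

lemma arith_s {lθ s : ℝ} (h : 2 * lθ + 2 ≤ s) (hlθ : 0 < lθ) : s ^ 2 / 2 ≤ (s - lθ) * s := by
  nlinarith

lemma arith_key {qr s2 S nt2 : ℝ} (hq : 0 < qr) (h1 : nt2 ≤ 4 * qr * s2) (h2 : s2 / 2 ≤ S) :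
    nt2 ≤ 8 * qr * S := by nlinarith

end satdz_aux

set_option maxHeartbeats 2000000 in
/-- key dissipation inequality for the estimation-error vector field `H`. -/
theorem statement5 (q n : ℕ) (hq : 0 < q)
    (Θ : Set (EuclideanSpace ℝ (Fin q))) (hΘ : IsCompact Θ)
    (lθ ls εs r1 : ℝ) (hlθpos : 0 < lθ) (hlθ : ∀ θ ∈ Θ, ‖θ‖ ≤ lθ) (hr1 : 0 < r1)
    (hεs : 0 < εs) (hεs1 : εs ≤ 1)
    -- φ continuous
    (φ : EuclideanSpace ℝ (Fin q) → EuclideanSpace ℝ (Fin n) → EuclideanSpace ℝ (Fin n))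
    (hφ : Continuous fun p : EuclideanSpace ℝ (Fin q) × EuclideanSpace ℝ (Fin n) =>
      φ p.1 p.2)
    -- Assumption 3 (monotonicity part): l_s > √q·l_θ, ς, M1 continuous
    (hls : Real.sqrt q * lθ < ls)
    (ς : EuclideanSpace ℝ (Fin n) →
      (EuclideanSpace ℝ (Fin n) →L[ℝ] EuclideanSpace ℝ (Fin q))) (hς : Continuous ς)
    (M1 : EuclideanSpace ℝ (Fin n) →
      (EuclideanSpace ℝ (Fin q) →L[ℝ] EuclideanSpace ℝ (Fin q))) (hM1 : Continuous M1)
    (hmono : ∀ θ ∈ Θ, ∀ (θ' : EuclideanSpace ℝ (Fin q))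
      (xr : EuclideanSpace ℝ (Fin n)), ‖θ'‖ ≤ ls → ‖xr‖ ≤ r1 →
      ⟪θ' - θ, M1 xr (θ' - θ)⟫ ≤ ⟪θ' - θ, ς xr (φ θ' xr - φ θ xr)⟫ ∧
        0 ≤ ⟪θ' - θ, M1 xr (θ' - θ)⟫) :
    ∃ kdzs : ℝ, 0 < kdzs ∧ ∀ kdz ≥ kdzs, ∀ θ ∈ Θ,
      ∀ (θt : EuclideanSpace ℝ (Fin q)) (xr : EuclideanSpace ℝ (Fin n)), ‖xr‖ ≤ r1 →
        ⟪θt, -(ς xr (φ (satv ls εs (θ + θt)) xr - φ (satv ls εs θ) xr)) -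
            kdz • dzv lθ (θt + θ)⟫ ≤ -⟪θt, M1 xr θt⟫ ∧
          -⟪θt, M1 xr θt⟫ ≤ 0 := by
  classical
  have hq0 : (0:ℝ) < q := by exact_mod_cast hq
  have hq1 : (1:ℝ) ≤ Real.sqrt q := by
    rw [show (1:ℝ) = Real.sqrt 1 by simp]
    exact Real.sqrt_le_sqrt (by exact_mod_cast hq)
  have hsq0 : 0 < Real.sqrt q := lt_of_lt_of_le one_pos hq1
  have hsq2 : Real.sqrt q ^ 2 = (q : ℝ) := Real.sq_sqrt (Nat.cast_nonneg q)
  have hls0 : 0 < ls := lt_of_le_of_lt (by positivity) hls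
  have hlθls : lθ < ls := arith1 hq1 hlθpos hls
  have hdiv : lθ < ls / Real.sqrt q := by rw [lt_div_iff₀ hsq0, mul_comm]; exact hls
  -- bounds from compactness
  obtain ⟨cM0, hcM0⟩ := (isCompact_closedBall (0 : EuclideanSpace ℝ (Fin n)) r1).exists_bound_of_continuousOn hM1.continuousOn
  obtain ⟨cς0, hcς0⟩ := (isCompact_closedBall (0 : EuclideanSpace ℝ (Fin n)) r1).exists_bound_of_continuousOn hς.continuousOn
  set Rs : ℝ := Real.sqrt q * (ls + εs) with hRs
  obtain ⟨cφ0, hcφ0⟩ := ((isCompact_closedBall (0 : EuclideanSpace ℝ (Fin q)) Rs).prod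
    (isCompact_closedBall (0 : EuclideanSpace ℝ (Fin n)) r1)).exists_bound_of_continuousOn hφ.continuousOn
  set cM : ℝ := max cM0 0 with hcM
  set cς : ℝ := max cς0 0 with hcς
  set cφ : ℝ := max cφ0 0 with hcφdef
  have hcM_nn : 0 ≤ cM := le_max_right _ _
  have hcς_nn : 0 ≤ cς := le_max_right _ _
  have hcφ_nn : 0 ≤ cφ := le_max_right _ _
  set δ : ℝ := ls - lθ with hδdef
  have hδ : 0 < δ := by simp only [hδdef]; linarith
  set d : ℝ := min (ls / Real.sqrt q - lθ) 1 with hddef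
  have hd0 : 0 < d := lt_min (by linarith) one_pos
  have hd1 : d ≤ 1 := min_le_right _ _
  set m : ℝ := d ^ 3 * (lθ + 1) with hmdef
  have hm : 0 < m := by positivity
  set R0 : ℝ := lθ + Real.sqrt q * (2 * lθ + 2) with hR0def
  have hR0pos : 0 < R0 := by positivity
  set A : ℝ := cM + 2 * cς * cφ / δ with hAdef
  have hA : 0 ≤ A := by positivity
  have hRs_nn : 0 ≤ Rs := by positivity
  have hcM_ge : cM0 ≤ cM := le_max_left _ _
  have hcς_ge : cς0 ≤ cς := le_max_left _ _
  have hcφ_ge : cφ0 ≤ cφ := le_max_left _ _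
  clear_value Rs cM cς cφ δ d m R0 A
  refine ⟨1 + 8 * q * A + A * R0 ^ 2 / m, by positivity, ?_⟩
  intro kdz hkdz θ hθ θt xr hxr
  have hkdz0 : 0 < kdz := by
    refine lt_of_lt_of_le ?_ hkdz; positivity
  have hkdz8 : 8 * q * A ≤ kdz := by
    refine le_trans ?_ hkdz
    have h1 : 0 ≤ A * R0 ^ 2 / m := by positivity
    linarith
  have hkdzR : A * R0 ^ 2 / m ≤ kdz := by
    refine le_trans ?_ hkdz
    have h1 : (0:ℝ) ≤ 8 * q * A := by positivity
    linarith
  have hθn : ‖θ‖ ≤ lθ := hlθ θ hθ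
  have hθc : ∀ i, |θ i| ≤ lθ := fun i => (coord_le θ i).trans hθn
  -- nonnegativity of the quadratic form
  have hM1nn : 0 ≤ ⟪θt, M1 xr θt⟫ := by
    by_cases hz : θt = 0
    · simp [hz]
    · have htn : 0 < ‖θt‖ := norm_pos_iff.mpr hz
      set t : ℝ := (ls - lθ) / ‖θt‖ with htdef
      have ht : 0 < t := div_pos (by linarith) htn
      clear_value t
      have hθ' : ‖θ + t • θt‖ ≤ ls := by
        calc ‖θ + t • θt‖ ≤ ‖θ‖ + ‖t • θt‖ := norm_add_le _ _
          _ = ‖θ‖ + t * ‖θt‖ := by rw [norm_smul, Real.norm_eq_abs, abs_of_pos ht]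
          _ = ‖θ‖ + (ls - lθ) := by rw [htdef, div_mul_cancel₀ _ (ne_of_gt htn)]
          _ ≤ ls := by linarith
      have h2 := (hmono θ hθ (θ + t • θt) xr hθ' hxr).2
      rw [add_sub_cancel_left] at h2
      have e1 : (M1 xr) (t • θt) = t • ((M1 xr) θt) := (M1 xr).map_smul t θt
      rw [e1, real_inner_smul_left, real_inner_smul_right] at h2
      by_contra hneg
      push_neg at hneg
      have : t * (t * ⟪θt, M1 xr θt⟫) < 0 :=
        mul_neg_of_pos_of_neg ht (mul_neg_of_pos_of_neg ht hneg)
      linarith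
  refine ⟨?_, by linarith⟩
  -- expand the inner product
  rw [inner_sub_right, inner_neg_right, real_inner_smul_right]
  have hSsum : ⟪θt, dzv lθ (θt + θ)⟫ = ∑ i, θt i * dz lθ (θt i + θ i) := by
    simp [dzv, PiLp.inner_apply, RCLike.inner_apply, conj_trivial]
    exact Finset.sum_congr rfl fun i _ => mul_comm _ _
  have hterm0 : ∀ i, 0 ≤ θt i * dz lθ (θt i + θ i) := by
    intro i
    have h := dz_L0 (a := θ i) (b := θt i + θ i) hlθpos (hθc i)
    rwa [add_sub_cancel_right] at h
  have hS0 : 0 ≤ ⟪θt, dzv lθ (θt + θ)⟫ := by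
    rw [hSsum]; exact Finset.sum_nonneg fun i _ => hterm0 i
  by_cases hcase : ‖θ + θt‖ ≤ ls
  · -- unsaturated case
    have hsat1 : satv ls εs (θ + θt) = θ + θt :=
      (WithLp.ofLp_injective 2) <| funext fun i => sat_eq_self ((coord_le _ i).trans hcase)
    have hsat2 : satv ls εs θ = θ :=
      (WithLp.ofLp_injective 2) <| funext fun i => sat_eq_self (le_trans (hθc i) hlθls.le)
    have hA1 := (hmono θ hθ (θ + θt) xr hcase hxr).1
    rw [add_sub_cancel_left] at hA1
    rw [hsat1, hsat2]
    have hks : 0 ≤ kdz * ⟪θt, dzv lθ (θt + θ)⟫ := mul_nonneg hkdz0.le hS0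
    linarith
  · -- saturated case
    push_neg at hcase
    have hθtlb : δ ≤ ‖θt‖ := by
      have h1 : ‖θ + θt‖ ≤ ‖θ‖ + ‖θt‖ := norm_add_le _ _
      simp only [hδdef]; linarith
    have hθt0 : 0 < ‖θt‖ := lt_of_lt_of_le hδ hθtlb
    -- bound the right-hand side terms
    have hxr' : xr ∈ Metric.closedBall (0 : EuclideanSpace ℝ (Fin n)) r1 :=
      mem_closedBall_zero_iff.mpr hxr
    have hMb : ⟪θt, M1 xr θt⟫ ≤ cM * ‖θt‖ ^ 2 := by
      calc ⟪θt, M1 xr θt⟫ ≤ ‖θt‖ * ‖M1 xr θt‖ := real_inner_le_norm _ _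
        _ ≤ ‖θt‖ * (‖M1 xr‖ * ‖θt‖) :=
            mul_le_mul_of_nonneg_left ((M1 xr).le_opNorm θt) (norm_nonneg _)
        _ ≤ ‖θt‖ * (cM * ‖θt‖) := by
            have : ‖M1 xr‖ ≤ cM := le_trans (hcM0 xr hxr') hcM_ge
            have h2 : ‖M1 xr‖ * ‖θt‖ ≤ cM * ‖θt‖ :=
              mul_le_mul_of_nonneg_right this (norm_nonneg _)
            exact mul_le_mul_of_nonneg_left h2 (norm_nonneg _)
        _ = cM * ‖θt‖ ^ 2 := by ring
    have hsatb : ∀ w : EuclideanSpace ℝ (Fin q), ‖satv ls εs w‖ ≤ Rs := by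
      intro w
      rw [hRs]
      exact norm_le_of_coord (by positivity) (fun i => abs_sat_le hls0 hεs (w i))
    have hφb : ∀ w : EuclideanSpace ℝ (Fin q), ‖φ (satv ls εs w) xr‖ ≤ cφ := by
      intro w
      refine le_trans (hcφ0 (satv ls εs w, xr) ?_) hcφ_ge
      exact Set.mem_prod.mpr ⟨mem_closedBall_zero_iff.mpr (hsatb w), hxr'⟩
    have hΔb : ‖φ (satv ls εs (θ + θt)) xr - φ (satv ls εs θ) xr‖ ≤ 2 * cφ := by
      calc ‖φ (satv ls εs (θ + θt)) xr - φ (satv ls εs θ) xr‖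
          ≤ ‖φ (satv ls εs (θ + θt)) xr‖ + ‖φ (satv ls εs θ) xr‖ := norm_sub_le _ _
        _ ≤ 2 * cφ := by linarith [hφb (θ + θt), hφb θ]
    have hinb : -⟪θt, ς xr (φ (satv ls εs (θ + θt)) xr - φ (satv ls εs θ) xr)⟫ ≤
        ‖θt‖ * (cς * (2 * cφ)) := by
      calc -⟪θt, ς xr (φ (satv ls εs (θ + θt)) xr - φ (satv ls εs θ) xr)⟫
          ≤ |⟪θt, ς xr (φ (satv ls εs (θ + θt)) xr - φ (satv ls εs θ) xr)⟫| := neg_le_abs _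
        _ ≤ ‖θt‖ * ‖ς xr (φ (satv ls εs (θ + θt)) xr - φ (satv ls εs θ) xr)‖ :=
            abs_real_inner_le_norm _ _
        _ ≤ ‖θt‖ * (cς * (2 * cφ)) := by
            refine mul_le_mul_of_nonneg_left ?_ (norm_nonneg _)
            calc ‖ς xr (φ (satv ls εs (θ + θt)) xr - φ (satv ls εs θ) xr)‖
                ≤ ‖ς xr‖ * ‖φ (satv ls εs (θ + θt)) xr - φ (satv ls εs θ) xr‖ :=
                  (ς xr).le_opNorm _
              _ ≤ cς * (2 * cφ) := mul_le_mul
                  (le_trans (hcς0 xr hxr') hcς_ge) hΔb (norm_nonneg _) hcς_nn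
    have hlin : ‖θt‖ * (cς * (2 * cφ)) ≤ 2 * cς * cφ / δ * ‖θt‖ ^ 2 :=
      arith_lin hcς_nn hcφ_nn hδ hθtlb
    have hRHS : ⟪θt, M1 xr θt⟫ -
        ⟪θt, ς xr (φ (satv ls εs (θ + θt)) xr - φ (satv ls εs θ) xr)⟫ ≤ A * ‖θt‖ ^ 2 := by
      have : A * ‖θt‖ ^ 2 = cM * ‖θt‖ ^ 2 + 2 * cς * cφ / δ * ‖θt‖ ^ 2 := by
        simp only [hAdef]; ring
      linarith [hMb, hinb, hlin]
    -- lower bound on the dead-zone term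
    obtain ⟨i0, hi0⟩ := exists_big_coord hq (θt + θ)
    have hvc : (θt + θ) i0 = θt i0 + θ i0 := rfl
    rw [hvc] at hi0
    have hvn : ls < ‖θt + θ‖ := by rwa [add_comm θt θ]
    have hS_single : θt i0 * dz lθ (θt i0 + θ i0) ≤ ⟪θt, dzv lθ (θt + θ)⟫ := by
      rw [hSsum]
      exact Finset.single_le_sum (fun i _ => hterm0 i) (Finset.mem_univ i0)
    have hfinal : A * ‖θt‖ ^ 2 ≤ kdz * ⟪θt, dzv lθ (θt + θ)⟫ := by
      by_cases hB : R0 ≤ ‖θt‖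
      · -- large θt
        have hv_lb : ‖θt‖ - lθ ≤ ‖θt + θ‖ := by
          have h1 : ‖θt‖ = ‖(θt + θ) - θ‖ := by rw [add_sub_cancel_right]
          have h2 : ‖(θt + θ) - θ‖ ≤ ‖θt + θ‖ + ‖θ‖ := norm_sub_le _ _
          linarith [h1 ▸ h2, hθn]
        set s : ℝ := |θt i0 + θ i0| with hsdef
        have hsb : ‖θt‖ - lθ ≤ Real.sqrt q * s := by
          calc ‖θt‖ - lθ ≤ ‖θt + θ‖ := hv_lb
            _ ≤ Real.sqrt q * s := hi0
        have hR0' : Real.sqrt q * (2 * lθ + 2) ≤ ‖θt‖ - lθ := by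
          simp only [hR0def] at hB; linarith
        have hs_big : 2 * lθ + 2 ≤ s :=
          le_of_mul_le_mul_left (by linarith) hsq0
        have hvi0 : lθ + 1 ≤ s := by linarith
        have hL1 := dz_L1 (a := θ i0) (b := θt i0 + θ i0) hlθpos (hθc i0) hvi0
        rw [add_sub_cancel_right] at hL1
        have hθt2lθ : 2 * lθ ≤ ‖θt‖ := by
          have h9 := mul_le_mul_of_nonneg_right hq1 (show (0:ℝ) ≤ 2 * lθ + 2 by linarith)
          rw [one_mul] at h9
          simp only [hR0def] at hB; linarith
        have h2s : ‖θt‖ ≤ 2 * Real.sqrt q * s := by linarith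
        have hs2 : ‖θt‖ ^ 2 ≤ 4 * q * s ^ 2 :=
          arith_sq hsq2 (mul_le_mul h2s h2s (norm_nonneg θt) (by positivity))
        have hSs : s ^ 2 / 2 ≤ (s - lθ) * s := arith_s hs_big hlθpos
        have hkey : ‖θt‖ ^ 2 ≤ 8 * q * ⟪θt, dzv lθ (θt + θ)⟫ := by
          have h3 : s ^ 2 / 2 ≤ ⟪θt, dzv lθ (θt + θ)⟫ := by
            calc s ^ 2 / 2 ≤ (s - lθ) * s := hSs
              _ ≤ θt i0 * dz lθ (θt i0 + θ i0) := hL1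
              _ ≤ ⟪θt, dzv lθ (θt + θ)⟫ := hS_single
          exact arith_key hq0 hs2 h3
        calc A * ‖θt‖ ^ 2 ≤ A * (8 * q * ⟪θt, dzv lθ (θt + θ)⟫) :=
              mul_le_mul_of_nonneg_left hkey hA
          _ = (8 * q * A) * ⟪θt, dzv lθ (θt + θ)⟫ := by ring
          _ ≤ kdz * ⟪θt, dzv lθ (θt + θ)⟫ := mul_le_mul_of_nonneg_right hkdz8 hS0
      · -- moderate θt
        push_neg at hB
        have hvi0 : lθ + d ≤ |θt i0 + θ i0| := by
          have h1 : ls < Real.sqrt q * |θt i0 + θ i0| := lt_of_lt_of_le hvn hi0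
          have h2 : ls / Real.sqrt q ≤ |θt i0 + θ i0| := by
            rw [div_le_iff₀ hsq0, mul_comm]; exact h1.le
          have h3 : d ≤ ls / Real.sqrt q - lθ := by rw [hddef]; exact min_le_left _ _
          linarith
        have hL2 := dz_L2 (a := θ i0) (b := θt i0 + θ i0) hlθpos (hθc i0) hd0 hd1 hvi0
        rw [add_sub_cancel_right] at hL2
        have hmS : m ≤ ⟪θt, dzv lθ (θt + θ)⟫ := by rw [hmdef]; exact le_trans hL2 hS_single
        calc A * ‖θt‖ ^ 2 ≤ A * R0 ^ 2 :=
              mul_le_mul_of_nonneg_left (pow_le_pow_left₀ (norm_nonneg _) hB.le 2) hA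
          _ = A * R0 ^ 2 / m * m := by rw [div_mul_cancel₀ _ (ne_of_gt hm)]
          _ ≤ kdz * m := mul_le_mul_of_nonneg_right hkdzR hm.le
          _ ≤ kdz * ⟪θt, dzv lθ (θt + θ)⟫ := mul_le_mul_of_nonneg_left hmS hkdz0.le
    linarith [hRHS, hfinal]
end
end
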